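/- In type A_n, for the Dyck-path polytope P(ω_k) ⊂ ℝ^{n(n+1)/2}_{≥0} of the k-th fundamental weight (defined by the inequalities: for every Dyck path b = (β₁,…,β_r) starting at a simple root α_i and ending at a simple root α_j with i ≤ k ≤ j, one has ∑_t p_{β_t} ≤ 1; and for Dyck paths with j < k or i > k, ∑_t p_{β_t} ≤ 0), the number of lattice points of P(ω_k) equals binom(n+1, k), the dimension of Λ^k(ℂ^{n+1}). -/

import Mathlib

/-- A Dyck path in type `A_n` (0-based): a nonempty sequence of positive roots
`α_{a,b}` (recorded as pairs `(a, b)` with `a ≤ b`), starting and ending at simple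
roots (diagonal pairs), each step increasing one of the two coordinates by `1`. -/
def IsDyckPath {n : ℕ} (L : List (Fin n × Fin n)) : Prop :=
  L ≠ [] ∧
  (∀ r ∈ L, r.1 ≤ r.2) ∧
  (∃ a, L.head? = some (a, a)) ∧
  (∃ b, L.getLast? = some (b, b)) ∧
  List.Chain' (fun r r' : Fin n × Fin n =>
    ((r'.1 : ℕ) = (r.1 : ℕ) + 1 ∧ r'.2 = r.2) ∨
     (r'.1 = r.1 ∧ ((r'.2 : ℕ) = (r.2 : ℕ) + 1))) L

open Finset

namespace Stmt14Aux

variable {n : ℕ}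


variable {n : ℕ}

def step : Fin n × Fin n → Fin n × Fin n → Prop := fun r r' =>
  ((r'.1 : ℕ) = (r.1 : ℕ) + 1 ∧ r'.2 = r.2) ∨ (r'.1 = r.1 ∧ ((r'.2 : ℕ) = (r.2 : ℕ) + 1))

lemma step_lt {r r' : Fin n × Fin n} (h : step r r') : r < r' := by
  rcases h with ⟨h1, h2⟩ | ⟨h1, h2⟩
  · rw [Prod.lt_iff]; left
    exact ⟨by rw [Fin.lt_def]; omega, le_of_eq h2.symm⟩
  · rw [Prod.lt_iff]; right
    exact ⟨le_of_eq h1.symm, by rw [Fin.lt_def]; omega⟩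

lemma pairwise_of_chain {L : List (Fin n × Fin n)}
    (h : List.Chain' (step (n := n)) L) : L.Pairwise (· < ·) :=
  List.isChain_iff_pairwise.mp (h.imp fun _ _ => step_lt)

lemma head_le_mem {L : List (Fin n × Fin n)} {h : Fin n × Fin n}
    (hp : L.Pairwise (· < ·)) (hh : L.head? = some h) {r} (hr : r ∈ L) : h ≤ r := by
  cases L with
  | nil => simp at hh
  | cons x t =>
    simp only [List.head?_cons, Option.some.injEq] at hh
    subst hh
    rcases List.mem_cons.mp hr with rfl | hrt
    · exact le_refl _
    · exact le_of_lt ((List.pairwise_cons.mp hp).1 r hrt)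

lemma mem_le_last {L : List (Fin n × Fin n)} {z : Fin n × Fin n}
    (hp : L.Pairwise (· < ·)) (hh : L.getLast? = some z) {r} (hr : r ∈ L) : r ≤ z := by
  have hp' : L.reverse.Pairwise (fun a b => b < a) := List.pairwise_reverse.mpr hp
  have hh' : L.reverse.head? = some z := by rw [List.head?_reverse]; exact hh
  have hr' : r ∈ L.reverse := List.mem_reverse.mpr hr
  cases hL : L.reverse with
  | nil => simp [hL] at hh'
  | cons x t =>
    rw [hL] at hp' hh' hr'
    simp only [List.head?_cons, Option.some.injEq] at hh'
    subst hh'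
    rcases List.mem_cons.mp hr' with rfl | hrt
    · exact le_refl _
    · exact le_of_lt ((List.pairwise_cons.mp hp').1 r hrt)

lemma sum_le_one {α : Type*} {f : α → ℕ} :
    ∀ {L : List α}, L.Nodup → (∀ r ∈ L, f r ≤ 1) →
      (∀ r ∈ L, ∀ s ∈ L, f r ≠ 0 → f s ≠ 0 → r = s) → (L.map f).sum ≤ 1 := by
  intro L
  induction L with
  | nil => intro _ _ _; simp
  | cons x t ih =>
    intro hnd h1 h2
    rw [List.map_cons, List.sum_cons]
    rcases List.nodup_cons.mp hnd with ⟨hxt, hndt⟩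
    by_cases hx : f x = 0
    · rw [hx, Nat.zero_add]
      exact ih hndt (fun r hr => h1 r (List.mem_cons_of_mem _ hr))
        (fun r hr s hs => h2 r (List.mem_cons_of_mem _ hr) s (List.mem_cons_of_mem _ hs))
    · have ht0 : (t.map f).sum = 0 := by
        apply List.sum_eq_zero
        intro y hy
        rcases List.mem_map.mp hy with ⟨s, hs, rfl⟩
        by_contra hs0
        exact hxt (h2 x (List.mem_cons_self) s (List.mem_cons_of_mem _ hs) hx hs0 ▸ hs)
      rw [ht0]
      simpa using h1 x (List.mem_cons_self)

lemma two_le_sum {α : Type*} [DecidableEq α] {f : α → ℕ} {L : List α} (hnd : L.Nodup)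
    {x y : α} (hx : x ∈ L) (hy : y ∈ L) (hxy : x ≠ y) : f x + f y ≤ (L.map f).sum := by
  have hsub : ({x, y} : Finset α) ⊆ L.toFinset := by
    intro z hz
    rcases Finset.mem_insert.mp hz with rfl | hz
    · exact List.mem_toFinset.mpr hx
    · exact List.mem_toFinset.mpr (Finset.mem_singleton.mp hz ▸ hy)
  calc f x + f y = ∑ z ∈ ({x, y} : Finset α), f z := (Finset.sum_pair hxy).symm
    _ ≤ ∑ z ∈ L.toFinset, f z := Finset.sum_le_sum_of_subset hsub
    _ = (L.map f).sum := by rw [List.sum_toFinset _ hnd]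

lemma single_le_sum' {α : Type*} {f : α → ℕ} {L : List α} {x : α} (hx : x ∈ L) :
    f x ≤ (L.map f).sum :=
  List.single_le_sum (fun _ _ => Nat.zero_le _) _ (List.mem_map_of_mem (f := f) hx)






/-- horizontal extension: from `(x, y)` move the second coordinate up to `y'`. -/
lemma ext_h (x : Fin n) : ∀ (d : ℕ) (y y' : Fin n), (y' : ℕ) = (y : ℕ) + d →
    ∃ M : List (Fin n × Fin n), List.Chain' step ((x, y) :: M) ∧
      ((x, y) :: M).getLast? = some (x, y') ∧
      ∀ r ∈ M, r.1 = x ∧ y < r.2 ∧ r.2 ≤ y' := by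
  intro d
  induction d with
  | zero =>
    intro y y' h
    have : y' = y := Fin.ext (by omega)
    subst this
    exact ⟨[], List.isChain_singleton _, rfl, by simp⟩
  | succ d ih =>
    intro y y' h
    have hy'' : ((y : ℕ) + d) < n := by have := y'.isLt; omega
    set y'' : Fin n := ⟨(y : ℕ) + d, hy''⟩ with hy''def
    have hval : (y'' : ℕ) = (y : ℕ) + d := rfl
    obtain ⟨M, hc, hl, hm⟩ := ih y y'' rfl
    refine ⟨M ++ [(x, y')], ?_, ?_, ?_⟩
    · rw [show (x, y) :: (M ++ [(x, y')]) = ((x, y) :: M) ++ [(x, y')] by simp]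
      apply List.IsChain.append hc (List.isChain_singleton _)
      intro z hz w hw
      simp only [List.head?_cons, Option.mem_def, Option.some.injEq] at hw
      rw [hl] at hz
      simp only [Option.mem_def, Option.some.injEq] at hz
      subst hz; subst hw
      right
      refine ⟨rfl, ?_⟩
      show (y' : ℕ) = (y'' : ℕ) + 1
      omega
    · rw [show (x, y) :: (M ++ [(x, y')]) = ((x, y) :: M) ++ [(x, y')] by simp]
      exact List.getLast?_concat
    · intro r hr
      rcases List.mem_append.mp hr with hr | hr
      · obtain ⟨h1, h2, h3⟩ := hm r hr
        exact ⟨h1, h2, le_trans h3 (by rw [Fin.le_def]; omega)⟩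
      · simp only [List.mem_singleton] at hr
        subst hr
        refine ⟨rfl, Fin.lt_def.mpr ?_, le_refl _⟩
        show (y : ℕ) < (y' : ℕ)
        omega

/-- vertical extension: from `(x, y)` move the first coordinate up to `x'`. -/
lemma ext_v (y : Fin n) : ∀ (d : ℕ) (x x' : Fin n), (x' : ℕ) = (x : ℕ) + d →
    ∃ M : List (Fin n × Fin n), List.Chain' step ((x, y) :: M) ∧
      ((x, y) :: M).getLast? = some (x', y) ∧
      ∀ r ∈ M, r.2 = y ∧ x < r.1 ∧ r.1 ≤ x' := by
  intro d
  induction d with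
  | zero =>
    intro x x' h
    have : x' = x := Fin.ext (by omega)
    subst this
    exact ⟨[], List.isChain_singleton _, rfl, by simp⟩
  | succ d ih =>
    intro x x' h
    have hx'' : ((x : ℕ) + d) < n := by have := x'.isLt; omega
    set x'' : Fin n := ⟨(x : ℕ) + d, hx''⟩ with hx''def
    have hval : (x'' : ℕ) = (x : ℕ) + d := rfl
    obtain ⟨M, hc, hl, hm⟩ := ih x x'' rfl
    refine ⟨M ++ [(x', y)], ?_, ?_, ?_⟩
    · rw [show (x, y) :: (M ++ [(x', y)]) = ((x, y) :: M) ++ [(x', y)] by simp]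
      apply List.IsChain.append hc (List.isChain_singleton _)
      intro z hz w hw
      simp only [List.head?_cons, Option.mem_def, Option.some.injEq] at hw
      rw [hl] at hz
      simp only [Option.mem_def, Option.some.injEq] at hz
      subst hz; subst hw
      left
      refine ⟨?_, rfl⟩
      show (x' : ℕ) = (x'' : ℕ) + 1
      omega
    · rw [show (x, y) :: (M ++ [(x', y)]) = ((x, y) :: M) ++ [(x', y)] by simp]
      exact List.getLast?_concat
    · intro r hr
      rcases List.mem_append.mp hr with hr | hr
      · obtain ⟨h1, h2, h3⟩ := hm r hr
        exact ⟨h1, h2, le_trans h3 (by rw [Fin.le_def]; omega)⟩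
      · simp only [List.mem_singleton] at hr
        subst hr
        refine ⟨rfl, Fin.lt_def.mpr ?_, le_refl _⟩
        show (x : ℕ) < (x' : ℕ)
        omega

/-- glue a chain ending at `x` with a chain starting at `x`. -/
lemma chain_glue {α : Type*} {R : α → α → Prop} {L M : List α} {x : α}
    (hL : List.Chain' R L) (hlast : L.getLast? = some x) (hM : List.Chain' R (x :: M)) :
    List.Chain' R (L ++ M) := by
  apply List.IsChain.append hL (List.isChain_cons.mp hM).2
  intro z hz w hw
  rw [hlast] at hz
  simp only [Option.mem_def, Option.some.injEq] at hz
  subst hz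
  exact (List.isChain_cons.mp hM).1 w hw

lemma glue_getLast {α : Type*} {L M : List α} {x z : α}
    (hlast : L.getLast? = some x) (hM : (x :: M).getLast? = some z) :
    (L ++ M).getLast? = some z := by
  cases M with
  | nil => simpa using (by simpa using hM : x = z) ▸ hlast
  | cons m t =>
    rw [List.getLast?_append_of_ne_nil L (by simp)]
    simpa using hM










lemma exists_path (a a' b b' : Fin n) (h1 : a ≤ a') (h2 : a' ≤ b) (h3 : b ≤ b') :
    ∃ L, IsDyckPath L ∧ L.head? = some (a, a) ∧ L.getLast? = some (b', b') ∧
      (a, b) ∈ L ∧ (a', b') ∈ L := by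
  have hab : a ≤ b := le_trans h1 h2
  obtain ⟨M1, hc1, hl1, hm1⟩ := ext_h a ((b : ℕ) - (a : ℕ)) a b (by
    have := Fin.le_def.mp hab; omega)
  obtain ⟨M2, hc2, hl2, hm2⟩ := ext_v b ((a' : ℕ) - (a : ℕ)) a a' (by
    have := Fin.le_def.mp h1; omega)
  obtain ⟨M3, hc3, hl3, hm3⟩ := ext_h a' ((b' : ℕ) - (b : ℕ)) b b' (by
    have := Fin.le_def.mp h3; omega)
  obtain ⟨M4, hc4, hl4, hm4⟩ := ext_v b' ((b' : ℕ) - (a' : ℕ)) a' b' (by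
    have := Fin.le_def.mp (le_trans h2 h3); omega)
  refine ⟨((a, a) :: M1) ++ (M2 ++ (M3 ++ M4)), ?_, ?_, ?_, ?_, ?_⟩
  · -- IsDyckPath
    have hlast34 : ((a', b) :: (M3 ++ M4)).getLast? = some (b', b') := by
      rw [← List.cons_append]
      exact glue_getLast hl3 hl4
    have hchain34 : List.Chain' step ((a', b) :: (M3 ++ M4)) := by
      rw [← List.cons_append]
      exact chain_glue hc3 hl3 hc4
    have hlast234 : ((a, b) :: (M2 ++ (M3 ++ M4))).getLast? = some (b', b') := by
      rw [← List.cons_append]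
      exact glue_getLast hl2 hlast34
    have hchain234 : List.Chain' step ((a, b) :: (M2 ++ (M3 ++ M4))) := by
      rw [← List.cons_append]
      exact chain_glue hc2 hl2 hchain34
    have hlastL : (((a, a) :: M1) ++ (M2 ++ (M3 ++ M4))).getLast? = some (b', b') :=
      glue_getLast hl1 hlast234
    have hchainL : List.Chain' step (((a, a) :: M1) ++ (M2 ++ (M3 ++ M4))) :=
      chain_glue hc1 hl1 hchain234
    refine ⟨by simp, ?_, ⟨a, by simp⟩, ⟨b', hlastL⟩, hchainL⟩
    · intro r hr
      rcases List.mem_append.mp hr with hr | hr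
      · rcases List.mem_cons.mp hr with rfl | hr
        · exact le_refl _
        · obtain ⟨e1, e2, _⟩ := hm1 r hr
          rw [e1]; exact le_of_lt e2
      rcases List.mem_append.mp hr with hr | hr
      · obtain ⟨e1, e2, e3⟩ := hm2 r hr
        rw [e1]; exact le_trans e3 h2
      rcases List.mem_append.mp hr with hr | hr
      · obtain ⟨e1, e2, _⟩ := hm3 r hr
        rw [e1]; exact le_of_lt (lt_of_le_of_lt h2 e2)
      · obtain ⟨e1, _, e3⟩ := hm4 r hr
        rw [e1]; exact e3
  · simp
  · exact glue_getLast hl1 (by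
      rw [← List.cons_append]
      exact glue_getLast hl2 (by
        rw [← List.cons_append]
        exact glue_getLast hl3 hl4))
  · -- (a, b) ∈ L
    have : (a, b) ∈ (a, a) :: M1 := List.mem_of_getLast? hl1
    exact List.mem_append.mpr (Or.inl this)
  · -- (a', b') ∈ L
    have h3' : (a', b') ∈ (a', b) :: M3 := List.mem_of_getLast? hl3
    rcases List.mem_cons.mp h3' with heq | hin
    · -- (a', b') = (a', b), so b' = b ; it is the last of (a,b) :: M2
      have h2' : (a', b') ∈ (a, b) :: M2 := heq ▸ List.mem_of_getLast? hl2
      rcases List.mem_cons.mp h2' with heq2 | hin2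
      · exact List.mem_append.mpr (Or.inl (heq2 ▸ List.mem_of_getLast? hl1))
      · exact List.mem_append.mpr (Or.inr (List.mem_append.mpr (Or.inl hin2)))
    · exact List.mem_append.mpr (Or.inr (List.mem_append.mpr (Or.inr
        (List.mem_append.mpr (Or.inl hin)))))













/-- The polytope membership predicate. -/
def Sat (k : Fin n) (p : Fin n → Fin n → ℕ) : Prop :=
  (∀ a b : Fin n, ¬ a ≤ b → p a b = 0) ∧
  ∀ (L : List (Fin n × Fin n)) (a b : Fin n),
    IsDyckPath L → L.head? = some (a, a) → L.getLast? = some (b, b) →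
      (L.map fun r => p r.1 r.2).sum ≤ (if a ≤ k ∧ k ≤ b then 1 else 0)

/-- Antichains in the band. -/
def Band (k : Fin n) (F : Finset (Fin n × Fin n)) : Prop :=
  (∀ r ∈ F, r.1 ≤ k ∧ k ≤ r.2) ∧ ∀ r ∈ F, ∀ s ∈ F, r ≤ s → r = s

def ind (F : Finset (Fin n × Fin n)) : Fin n → Fin n → ℕ :=
  fun a b => if (a, b) ∈ F then 1 else 0

lemma chain_of_dyck {L : List (Fin n × Fin n)} (h : IsDyckPath L) :
    List.Chain' (step (n := n)) L := h.2.2.2.2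

lemma nodup_of_dyck {L : List (Fin n × Fin n)} (h : IsDyckPath L) : L.Nodup :=
  (pairwise_of_chain (chain_of_dyck h)).imp ne_of_lt

lemma sat_le_bound {k : Fin n} {p} (hp : Sat k p) (a b : Fin n) (hab : a ≤ b) :
    p a b ≤ if a ≤ k ∧ k ≤ b then 1 else 0 := by
  obtain ⟨L, hdp, hh, hl, hm, _⟩ := exists_path a a b b (le_refl a) hab (le_refl b)
  exact le_trans (single_le_sum' (f := fun r => p r.1 r.2) hm) (hp.2 L a b hdp hh hl)

lemma sat_band {k : Fin n} {p} (hp : Sat k p) {a b : Fin n} (h0 : p a b ≠ 0) :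
    a ≤ k ∧ k ≤ b := by
  have hab : a ≤ b := by
    by_contra hab
    exact h0 (hp.1 a b hab)
  by_contra hband
  have := sat_le_bound hp a b hab
  rw [if_neg hband] at this
  omega

lemma sat_antichain {k : Fin n} {p} (hp : Sat k p) {a b a' b' : Fin n}
    (h0 : p a b ≠ 0) (h1 : p a' b' ≠ 0) (hle : ((a, b) : Fin n × Fin n) ≤ (a', b')) :
    ((a, b) : Fin n × Fin n) = (a', b') := by
  by_contra hne
  obtain ⟨hak, hkb⟩ := sat_band hp h0
  obtain ⟨hak', hkb'⟩ := sat_band hp h1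
  obtain ⟨L, hdp, hh, hl, hm1, hm2⟩ :=
    exists_path a a' b b' hle.1 (le_trans hak' hkb) hle.2
  have hsum := two_le_sum (f := fun r => p r.1 r.2) (nodup_of_dyck hdp) hm1 hm2 hne
  have hbd := hp.2 L a b' hdp hh hl
  rw [if_pos ⟨hak, le_trans hkb hle.2⟩] at hbd
  simp only at hsum
  omega

lemma sat_iff {k : Fin n} {p} : Sat k p ↔ ∃ F, Band k F ∧ ind F = p := by
  constructor
  · intro hp
    classical
    refine ⟨Finset.univ.filter (fun r : Fin n × Fin n => p r.1 r.2 ≠ 0), ⟨?_, ?_⟩, ?_⟩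
    · intro r hr
      exact sat_band hp (Finset.mem_filter.mp hr).2
    · intro r hr s hs hle
      have := sat_antichain hp (Finset.mem_filter.mp hr).2 (Finset.mem_filter.mp hs).2
        (by simpa using hle)
      simpa using this
    · funext a b
      simp only [ind, Finset.mem_filter, Finset.mem_univ, true_and]
      by_cases h0 : p a b = 0
      · simp [h0]
      · rw [if_pos h0]
        have hab : a ≤ b := by
          by_contra hab
          exact h0 (hp.1 a b hab)
        have := sat_le_bound hp a b hab
        split at this <;> omega
  · rintro ⟨F, ⟨hb, hac⟩, rfl⟩
    constructor
    · intro a b hab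
      rw [ind, if_neg]
      intro hmem
      exact hab (le_trans (hb _ hmem).1 (hb _ hmem).2)
    · intro L a₀ b₀ hdp hh hl
      have hpw := pairwise_of_chain (chain_of_dyck hdp)
      by_cases hex : ∃ r ∈ L, r ∈ F
      · obtain ⟨r, hrL, hrF⟩ := hex
        have h1 : a₀ ≤ k := by
          have := head_le_mem hpw hh hrL
          exact le_trans this.1 (hb r hrF).1
        have h2 : k ≤ b₀ := by
          have := mem_le_last hpw hl hrL
          exact le_trans (hb r hrF).2 this.2
        rw [if_pos ⟨h1, h2⟩]
        apply sum_le_one (nodup_of_dyck hdp)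
        · intro s _
          unfold ind
          split <;> omega
        · intro s hs t ht hs0 ht0
          have hsF : (s.1, s.2) ∈ F := by
            by_contra hc
            exact hs0 (by simp [ind, hc])
          have htF : (t.1, t.2) ∈ F := by
            by_contra hc
            exact ht0 (by simp [ind, hc])
          by_contra hne
          have hcomp : s < t ∨ t < s := by
            have hsym : Symmetric (fun x y : Fin n × Fin n => x < y ∨ y < x) := by
              intro x y hxy
              exact hxy.symm
            haveI : Std.Symm (fun x y : Fin n × Fin n => x < y ∨ y < x) := ⟨fun _ _ h => hsym h⟩
            exact List.Pairwise.forall (R := fun x y : Fin n × Fin n => x < y ∨ y < x) (hpw.imp (fun h => Or.inl h)) hs ht hne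
          rcases hcomp with hc | hc
          · exact absurd (hac s (by simpa using hsF) t (by simpa using htF) (le_of_lt hc))
              (by intro h; exact absurd h (ne_of_lt hc))
          · exact absurd (hac t (by simpa using htF) s (by simpa using hsF) (le_of_lt hc))
              (by intro h; exact absurd h (ne_of_lt hc))
      · have : (L.map fun r => ind F r.1 r.2).sum = 0 := by
          apply List.sum_eq_zero
          intro x hx
          obtain ⟨s, hs, rfl⟩ := List.mem_map.mp hx
          have : (s.1, s.2) ∉ F := fun hc => hex ⟨s, hs, by simpa using hc⟩
          simp [ind, this]
        rw [this]
        exact Nat.zero_le _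





lemma fst_injOn {k : Fin n} {F} (hF : Band k F) :
    Set.InjOn Prod.fst (↑F : Set (Fin n × Fin n)) := by
  intro r hr s hs h
  rcases le_total r.2 s.2 with hle | hle
  · exact hF.2 r (by simpa using hr) s (by simpa using hs) ⟨le_of_eq h, hle⟩
  · exact (hF.2 s (by simpa using hs) r (by simpa using hr) ⟨le_of_eq h.symm, hle⟩).symm

lemma snd_injOn {k : Fin n} {F} (hF : Band k F) :
    Set.InjOn Prod.snd (↑F : Set (Fin n × Fin n)) := by
  intro r hr s hs h
  rcases le_total r.1 s.1 with hle | hle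
  · exact hF.2 r (by simpa using hr) s (by simpa using hs) ⟨hle, le_of_eq h⟩
  · exact (hF.2 s (by simpa using hs) r (by simpa using hr) ⟨hle, le_of_eq h.symm⟩).symm

lemma band_surj (k : Fin n) : ∀ (m : ℕ) (A B : Finset (Fin n)), A.card = m → B.card = m →
    (∀ a ∈ A, a ≤ k) → (∀ b ∈ B, k ≤ b) →
    ∃ F : Finset (Fin n × Fin n), Band k F ∧ F.image Prod.fst = A ∧ F.image Prod.snd = B := by
  intro m
  induction m with
  | zero =>
    intro A B hA hB _ _
    rw [Finset.card_eq_zero] at hA hB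
    subst hA; subst hB
    exact ⟨∅, ⟨by simp, by simp⟩, by simp, by simp⟩
  | succ m ih =>
    intro A B hA hB hAk hBk
    have hAne : A.Nonempty := Finset.card_pos.mp (by omega)
    have hBne : B.Nonempty := Finset.card_pos.mp (by omega)
    set a₀ := A.max' hAne with ha₀
    set b₀ := B.min' hBne with hb₀
    obtain ⟨F', hband', hfst', hsnd'⟩ := ih (A.erase a₀) (B.erase b₀)
      (by rw [Finset.card_erase_of_mem (A.max'_mem hAne)]; omega)
      (by rw [Finset.card_erase_of_mem (B.min'_mem hBne)]; omega)
      (fun a ha => hAk a (Finset.mem_of_mem_erase ha))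
      (fun b hb => hBk b (Finset.mem_of_mem_erase hb))
    have hkey1 : ∀ r ∈ F', r.1 < a₀ := by
      intro r hr
      have : r.1 ∈ A.erase a₀ := hfst' ▸ Finset.mem_image_of_mem _ hr
      exact lt_of_le_of_ne (A.le_max' _ (Finset.mem_of_mem_erase this))
        (Finset.ne_of_mem_erase this)
    have hkey2 : ∀ r ∈ F', b₀ < r.2 := by
      intro r hr
      have : r.2 ∈ B.erase b₀ := hsnd' ▸ Finset.mem_image_of_mem _ hr
      exact lt_of_le_of_ne (B.min'_le _ (Finset.mem_of_mem_erase this))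
        (Finset.ne_of_mem_erase this).symm
    refine ⟨insert (a₀, b₀) F', ⟨?_, ?_⟩, ?_, ?_⟩
    · intro r hr
      rcases Finset.mem_insert.mp hr with rfl | hr
      · exact ⟨hAk a₀ (A.max'_mem hAne), hBk b₀ (B.min'_mem hBne)⟩
      · exact hband'.1 r hr
    · intro r hr s hs hle
      rcases Finset.mem_insert.mp hr with rfl | hr <;>
        rcases Finset.mem_insert.mp hs with rfl | hs
      · rfl
      · exact absurd hle.1 (not_le_of_gt (hkey1 s hs))
      · exact absurd hle.2 (not_le_of_gt (hkey2 r hr))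
      · exact hband'.2 r hr s hs hle
    · rw [Finset.image_insert, hfst']
      exact Finset.insert_erase (A.max'_mem hAne)
    · rw [Finset.image_insert, hsnd']
      exact Finset.insert_erase (B.min'_mem hBne)

lemma band_inj (k : Fin n) : ∀ (m : ℕ) (F F' : Finset (Fin n × Fin n)),
    Band k F → Band k F' → F.card = m →
    F.image Prod.fst = F'.image Prod.fst → F.image Prod.snd = F'.image Prod.snd → F = F' := by
  intro m
  induction m with
  | zero =>
    intro F F' _ _ hc hfst _
    rw [Finset.card_eq_zero] at hc
    subst hc
    simp only [Finset.image_empty] at hfst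
    exact (Finset.image_eq_empty.mp hfst.symm).symm
  | succ m ih =>
    intro F F' hF hF' hc hfst hsnd
    have hFne : F.Nonempty := Finset.card_pos.mp (by omega)
    have hAne : (F.image Prod.fst).Nonempty := hFne.image _
    have hBne : (F.image Prod.snd).Nonempty := hFne.image _
    set A := F.image Prod.fst with hA
    set B := F.image Prod.snd with hB
    set a₀ := A.max' hAne with ha₀
    set b₀ := B.min' hBne with hb₀
    have key : ∀ G : Finset (Fin n × Fin n), Band k G → G.image Prod.fst = A →
        G.image Prod.snd = B → (a₀, b₀) ∈ G := by
      intro G hG hGA hGB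
      have h1 : a₀ ∈ G.image Prod.fst := hGA ▸ A.max'_mem hAne
      have h2 : b₀ ∈ G.image Prod.snd := hGB ▸ B.min'_mem hBne
      obtain ⟨r, hrG, hr⟩ := Finset.mem_image.mp h1
      obtain ⟨s, hsG, hs⟩ := Finset.mem_image.mp h2
      have hs1 : s.1 ∈ A := hGA ▸ Finset.mem_image_of_mem Prod.fst hsG
      have hr2 : r.2 ∈ B := hGB ▸ Finset.mem_image_of_mem Prod.snd hrG
      have hsr : s ≤ r := by
        constructor
        · rw [hr]
          exact A.le_max' _ hs1
        · rw [hs]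
          exact B.min'_le _ hr2
      have := hG.2 s hsG r hrG hsr
      subst this
      have : s = (a₀, b₀) := Prod.ext hr hs
      exact this ▸ hsG
    have hF0 : (a₀, b₀) ∈ F := key F hF rfl rfl
    have hF'0 : (a₀, b₀) ∈ F' := key F' hF' hfst.symm hsnd.symm
    have herase_im : ∀ G : Finset (Fin n × Fin n), Band k G → (a₀, b₀) ∈ G →
        G.image Prod.fst = A → G.image Prod.snd = B →
        ((G.erase (a₀, b₀)).image Prod.fst = A.erase a₀ ∧
         (G.erase (a₀, b₀)).image Prod.snd = B.erase b₀) := by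
      intro G hG hmem hGA hGB
      constructor
      · ext x
        simp only [Finset.mem_image, Finset.mem_erase]
        constructor
        · rintro ⟨r, ⟨hne, hrG⟩, rfl⟩
          refine ⟨?_, hGA ▸ Finset.mem_image_of_mem _ hrG⟩
          intro hx
          exact hne (fst_injOn hG (by simpa using hrG) (by simpa using hmem) hx)
        · rintro ⟨hne, hx⟩
          obtain ⟨r, hrG, rfl⟩ := Finset.mem_image.mp (hGA ▸ hx : x ∈ G.image Prod.fst)
          exact ⟨r, ⟨fun hc => hne (by rw [hc]), hrG⟩, rfl⟩
      · ext x
        simp only [Finset.mem_image, Finset.mem_erase]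
        constructor
        · rintro ⟨r, ⟨hne, hrG⟩, rfl⟩
          refine ⟨?_, hGB ▸ Finset.mem_image_of_mem _ hrG⟩
          intro hx
          exact hne (snd_injOn hG (by simpa using hrG) (by simpa using hmem) hx)
        · rintro ⟨hne, hx⟩
          obtain ⟨r, hrG, rfl⟩ := Finset.mem_image.mp (hGB ▸ hx : x ∈ G.image Prod.snd)
          exact ⟨r, ⟨fun hc => hne (by rw [hc]), hrG⟩, rfl⟩
    obtain ⟨hf1, hf2⟩ := herase_im F hF hF0 rfl rfl
    obtain ⟨hf1', hf2'⟩ := herase_im F' hF' hF'0 hfst.symm hsnd.symm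
    have hband_e : Band k (F.erase (a₀, b₀)) :=
      ⟨fun r hr => hF.1 r (Finset.mem_of_mem_erase hr),
       fun r hr s hs hle => hF.2 r (Finset.mem_of_mem_erase hr) s (Finset.mem_of_mem_erase hs) hle⟩
    have hband_e' : Band k (F'.erase (a₀, b₀)) :=
      ⟨fun r hr => hF'.1 r (Finset.mem_of_mem_erase hr),
       fun r hr s hs hle => hF'.2 r (Finset.mem_of_mem_erase hr) s (Finset.mem_of_mem_erase hs) hle⟩
    have heq := ih (F.erase (a₀, b₀)) (F'.erase (a₀, b₀)) hband_e hband_e'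
      (by rw [Finset.card_erase_of_mem hF0]; omega)
      (hf1.trans hf1'.symm) (hf2.trans hf2'.symm)
    calc F = insert (a₀, b₀) (F.erase (a₀, b₀)) := (Finset.insert_erase hF0).symm
      _ = insert (a₀, b₀) (F'.erase (a₀, b₀)) := by rw [heq]
      _ = F' := Finset.insert_erase hF'0

lemma vand (x y : ℕ) :
    ∑ m ∈ Finset.range (x + 1), x.choose m * y.choose m = (x + y).choose y := by
  have h : (x + y).choose y = ∑ i ∈ Finset.range (y + 1), x.choose i * y.choose i := by
    rw [Nat.add_choose_eq, Finset.Nat.sum_antidiagonal_eq_sum_range_succ_mk]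
    apply Finset.sum_congr rfl
    intro i hi
    rw [Finset.mem_range] at hi
    show x.choose i * y.choose (y - i) = _
    rw [Nat.choose_symm (by omega : i ≤ y)]
  rw [h]
  have e1 : ∑ i ∈ Finset.range (y + 1), x.choose i * y.choose i
      = ∑ i ∈ Finset.range (x + y + 1), x.choose i * y.choose i := by
    apply Finset.sum_subset
    · apply Finset.range_subset_range.mpr; omega
    · intro i _ hi
      rw [Finset.mem_range, not_lt] at hi
      rw [Nat.choose_eq_zero_of_lt (by omega : y < i), mul_zero]
  have e2 : ∑ i ∈ Finset.range (x + 1), x.choose i * y.choose i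
      = ∑ i ∈ Finset.range (x + y + 1), x.choose i * y.choose i := by
    apply Finset.sum_subset
    · apply Finset.range_subset_range.mpr; omega
    · intro i _ hi
      rw [Finset.mem_range, not_lt] at hi
      rw [Nat.choose_eq_zero_of_lt (by omega : x < i), zero_mul]
  rw [e1, e2]














lemma ind_injective : Function.Injective (ind (n := n)) := by
  intro F F' h
  ext r
  have := congrFun (congrFun h r.1) r.2
  simp only [ind] at this
  constructor
  · intro hr
    by_contra hr'
    rw [if_pos (by simpa using hr), if_neg (by simpa using hr')] at this
    omega
  · intro hr
    by_contra hr'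
    rw [if_neg (by simpa using hr'), if_pos (by simpa using hr)] at this
    omega


end Stmt14Aux

open Stmt14Aux

/-- the number of lattice points of the type `A_n` Dyck-path
polytope of the fundamental weight `ω_{k+1}` (0-based `k : Fin n`) equals
`binom (n+1) (k+1)`, the dimension of `Λ^{k+1}(ℂ^{n+1})`.  The lattice points are
tuples `p = (p_{a,b})_{a ≤ b}` of non-negative integers such that for every Dyck
path from `α_a` to `α_b` the sum of the coordinates along the path is at most `1`
if `a ≤ k ≤ b` and at most `0` otherwise. -/
theorem stmt14 (n : ℕ) (k : Fin n) :
    {p : Fin n → Fin n → ℕ |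
        (∀ a b : Fin n, ¬ a ≤ b → p a b = 0) ∧
        ∀ (L : List (Fin n × Fin n)) (a b : Fin n),
          IsDyckPath L → L.head? = some (a, a) → L.getLast? = some (b, b) →
            (L.map fun r => p r.1 r.2).sum ≤ (if a ≤ k ∧ k ≤ b then 1 else 0)}.ncard
      = Nat.choose (n + 1) (k + 1) := by
  classical
  have hset : {p : Fin n → Fin n → ℕ |
        (∀ a b : Fin n, ¬ a ≤ b → p a b = 0) ∧
        ∀ (L : List (Fin n × Fin n)) (a b : Fin n),
          IsDyckPath L → L.head? = some (a, a) → L.getLast? = some (b, b) →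
            (L.map fun r => p r.1 r.2).sum ≤ (if a ≤ k ∧ k ≤ b then 1 else 0)}
      = ind '' {F | Band k F} := by
    ext p
    simp only [Set.mem_setOf_eq, Set.mem_image]
    constructor
    · intro hp
      exact sat_iff.mp hp
    · rintro ⟨F, hF, rfl⟩
      exact sat_iff.mpr ⟨F, hF, rfl⟩
  rw [hset, Set.ncard_image_of_injective _ ind_injective]
  set proj : Finset (Fin n × Fin n) → Finset (Fin n) × Finset (Fin n) :=
    fun F => (F.image Prod.fst, F.image Prod.snd) with hproj
  have hinj : Set.InjOn proj {F | Band k F} := by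
    intro F hF F' hF' h
    exact band_inj k F.card F F' hF hF' rfl
      (congrArg Prod.fst h) (congrArg Prod.snd h)
  rw [← Set.ncard_image_of_injOn hinj]
  have himage : proj '' {F | Band k F}
      = {q : Finset (Fin n) × Finset (Fin n) |
          (∀ a ∈ q.1, a ≤ k) ∧ (∀ b ∈ q.2, k ≤ b) ∧ q.1.card = q.2.card} := by
    ext q
    constructor
    · rintro ⟨F, hF, rfl⟩
      refine ⟨?_, ?_, ?_⟩
      · intro a ha
        obtain ⟨r, hr, rfl⟩ := Finset.mem_image.mp ha
        exact (hF.1 r hr).1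
      · intro b hb
        obtain ⟨r, hr, rfl⟩ := Finset.mem_image.mp hb
        exact (hF.1 r hr).2
      · show (F.image Prod.fst).card = (F.image Prod.snd).card
        rw [Finset.card_image_of_injOn (fst_injOn hF),
          Finset.card_image_of_injOn (snd_injOn hF)]
    · rintro ⟨h1, h2, h3⟩
      obtain ⟨F, hF, hfst, hsnd⟩ := band_surj k q.1.card q.1 q.2 rfl h3.symm h1 h2
      exact ⟨F, hF, Prod.ext hfst hsnd⟩
  rw [himage]
  have hQ : {q : Finset (Fin n) × Finset (Fin n) |
          (∀ a ∈ q.1, a ≤ k) ∧ (∀ b ∈ q.2, k ≤ b) ∧ q.1.card = q.2.card}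
      = ↑(((Finset.Iic k).powerset ×ˢ (Finset.Ici k).powerset).filter
          fun q => q.1.card = q.2.card) := by
    ext q
    simp only [Set.mem_setOf_eq, Finset.coe_filter, Finset.mem_product,
      Finset.mem_powerset, Finset.mem_coe, Set.mem_setOf_eq]
    constructor
    · rintro ⟨h1, h2, h3⟩
      exact ⟨⟨fun a ha => Finset.mem_Iic.mpr (h1 a ha),
        fun b hb => Finset.mem_Ici.mpr (h2 b hb)⟩, h3⟩
    · rintro ⟨⟨h1, h2⟩, h3⟩
      exact ⟨fun a ha => Finset.mem_Iic.mp (h1 ha),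
        fun b hb => Finset.mem_Ici.mp (h2 hb), h3⟩
  rw [hQ, Set.ncard_coe_finset]
  have hcard : (((Finset.Iic k).powerset ×ˢ (Finset.Ici k).powerset).filter
      fun q => q.1.card = q.2.card).card
      = ∑ A ∈ (Finset.Iic k).powerset, ((n : ℕ) - (k : ℕ)).choose A.card := by
    rw [Finset.card_filter, Finset.sum_product]
    apply Finset.sum_congr rfl
    intro A _
    have : ∑ B ∈ (Finset.Ici k).powerset, (if A.card = B.card then 1 else 0)
        = ((Finset.Ici k).powerset.filter fun B => B.card = A.card).card := by
      rw [Finset.card_filter]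
      apply Finset.sum_congr rfl
      intro B _
      exact if_congr eq_comm rfl rfl
    rw [this, ← Finset.powersetCard_eq_filter, Finset.card_powersetCard, Fin.card_Ici]
  rw [hcard, Finset.sum_powerset_apply_card (fun m => ((n : ℕ) - (k : ℕ)).choose m),
    Fin.card_Iic]
  have : ∑ m ∈ Finset.range ((k : ℕ) + 1 + 1),
      ((k : ℕ) + 1).choose m • ((n : ℕ) - (k : ℕ)).choose m
      = ∑ m ∈ Finset.range (((k : ℕ) + 1) + 1),
      ((k : ℕ) + 1).choose m * ((n : ℕ) - (k : ℕ)).choose m := by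
    apply Finset.sum_congr rfl
    intro m _
    rw [smul_eq_mul]
  rw [this, vand ((k : ℕ) + 1) ((n : ℕ) - (k : ℕ))]
  have hk : (k : ℕ) < n := k.isLt
  have e1 : (k : ℕ) + 1 + ((n : ℕ) - (k : ℕ)) = n + 1 := by omega
  rw [e1]
  have e2 : (n : ℕ) - (k : ℕ) = (n + 1) - ((k : ℕ) + 1) := by omega
  rw [e2, Nat.choose_symm (by omega : (k : ℕ) + 1 ≤ n + 1)]
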